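/- Let (a,b) be a good pair with translation number λ and curvature angle φ, and let x₀,x₁,x₂ be an (a,b)-good chain in the hyperbolic upper half-plane ℍ². Let 0 < t₀ ≤ t₁ ≤ t₂ be real numbers and set y_j = t_j·e^{iφ} ∈ ℍ² for j = 0,1,2, and suppose d(y₀,y₁) = d(x₀,x₁) and d(y₁,y₂) = d(x₁,x₂). Then d(x₀,x₂) ≥ d(y₀,y₂). -/

import Mathlib

open UpperHalfPlane Real Filter

/-- The tension of the chain `x 0, x 1, …, x n`:
`τ = Σ_{j=1}^{n−1} d(x_{j−1},x_{j+1}) − Σ_{j=2}^{n−1} d(x_{j−1},x_j) − d(x_0,x_n)`. -/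
noncomputable def tension (n : ℕ) (x : ℕ → UpperHalfPlane) : ℝ :=
  (∑ j ∈ Finset.range (n - 1), dist (x j) (x (j + 2)))
    - (∑ j ∈ Finset.range (n - 2), dist (x (j + 1)) (x (j + 2)))
    - dist (x 0) (x n)

/-- The Gromov product `⟨x,y⟩_z = (d(x,z)+d(z,y)−d(x,y))/2`. -/
noncomputable def gromov (x y z : UpperHalfPlane) : ℝ :=
  (dist x z + dist z y - dist x y) / 2

/-- A pair `(a,b)` is good if `a, b ≥ 0` and `sinh(a−b) > 2·sinh(a/2)`. -/
def GoodPair (a b : ℝ) : Prop :=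
  0 ≤ a ∧ 0 ≤ b ∧ Real.sinh (a - b) > 2 * Real.sinh (a / 2)

/-- The chain `x 0, …, x n` is `(a,b)`-good. -/
def GoodChain (a b : ℝ) (n : ℕ) (x : ℕ → UpperHalfPlane) : Prop :=
  (∀ j < n, dist (x (j + 1)) (x j) ≥ a) ∧
  (∀ j, 1 ≤ j → j + 1 ≤ n → gromov (x (j - 1)) (x (j + 1)) (x j) ≤ b)

namespace DistortedAux

/-- The comparison function `Δ(d) = 2·arsinh(s·sinh(d/2))`. -/
noncomputable def Del (s d : ℝ) : ℝ := 2 * Real.arsinh (s * Real.sinh (d / 2))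

/-- Its derivative. -/
noncomputable def Del' (s d : ℝ) : ℝ :=
  s * Real.cosh (d / 2) / Real.sqrt (1 + (s * Real.sinh (d / 2)) ^ 2)

lemma hasDerivAt_Del (s d : ℝ) : HasDerivAt (Del s) (Del' s d) d := by
  have h1 : HasDerivAt (fun d : ℝ => d / 2) (1 / 2) d := (hasDerivAt_id d).div_const 2
  have h2 : HasDerivAt (fun d : ℝ => Real.sinh (d / 2)) (Real.cosh (d / 2) * (1 / 2)) d :=
    by have := (Real.hasDerivAt_sinh (d / 2)).comp d h1; exact this
  have h3 : HasDerivAt (fun d : ℝ => s * Real.sinh (d / 2))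
      (s * (Real.cosh (d / 2) * (1 / 2))) d := h2.const_mul s
  have h4 := ((Real.hasDerivAt_arsinh (s * Real.sinh (d / 2))).comp d h3).const_mul (2 : ℝ)
  refine h4.congr_deriv ?_
  have hpos : (0:ℝ) < Real.sqrt (1 + (s * Real.sinh (d / 2)) ^ 2) := by
    apply Real.sqrt_pos.2; positivity
  rw [Del']
  field_simp

lemma Del_mono (s : ℝ) (hs : 0 < s) : StrictMono (Del s) := by
  intro x y hxy
  have : Real.sinh (x / 2) < Real.sinh (y / 2) := Real.sinh_lt_sinh.2 (by linarith)
  exact mul_lt_mul_of_pos_left (Real.arsinh_strictMono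
    (mul_lt_mul_of_pos_left this hs)) (by norm_num)

lemma Del'_mono (s : ℝ) (hs0 : 0 < s) (hs1 : s ≤ 1) :
    ∀ x y, 0 ≤ x → x ≤ y → Del' s x ≤ Del' s y := by
  intro x y hx hxy
  have hu0 : 0 ≤ Real.sinh (x / 2) := Real.sinh_nonneg_iff.2 (by linarith)
  have huv : Real.sinh (x / 2) ≤ Real.sinh (y / 2) := Real.sinh_le_sinh.2 (by linarith)
  have hcu : Real.cosh (x / 2) ^ 2 = 1 + Real.sinh (x / 2) ^ 2 := by rw [Real.cosh_sq']
  have hcv : Real.cosh (y / 2) ^ 2 = 1 + Real.sinh (y / 2) ^ 2 := by rw [Real.cosh_sq']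
  have hcu0 : 0 < Real.cosh (x / 2) := Real.cosh_pos _
  have hcv0 : 0 < Real.cosh (y / 2) := Real.cosh_pos _
  have hAx : (0:ℝ) < Real.sqrt (1 + (s * Real.sinh (x / 2)) ^ 2) := by
    apply Real.sqrt_pos.2; positivity
  have hAy : (0:ℝ) < Real.sqrt (1 + (s * Real.sinh (y / 2)) ^ 2) := by
    apply Real.sqrt_pos.2; positivity
  rw [Del', Del', div_le_div_iff₀ hAx hAy]
  have e1 : (s * Real.cosh (x / 2) * Real.sqrt (1 + (s * Real.sinh (y / 2)) ^ 2)) ^ 2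
      = s ^ 2 * (1 + Real.sinh (x / 2) ^ 2) * (1 + (s * Real.sinh (y / 2)) ^ 2) := by
    rw [mul_pow, mul_pow, Real.sq_sqrt (by positivity), hcu]
  have e2 : (s * Real.cosh (y / 2) * Real.sqrt (1 + (s * Real.sinh (x / 2)) ^ 2)) ^ 2
      = s ^ 2 * (1 + Real.sinh (y / 2) ^ 2) * (1 + (s * Real.sinh (x / 2)) ^ 2) := by
    rw [mul_pow, mul_pow, Real.sq_sqrt (by positivity), hcv]
  have hsq : (s * Real.cosh (x / 2) * Real.sqrt (1 + (s * Real.sinh (y / 2)) ^ 2)) ^ 2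
      ≤ (s * Real.cosh (y / 2) * Real.sqrt (1 + (s * Real.sinh (x / 2)) ^ 2)) ^ 2 := by
    rw [e1, e2]
    have key : 0 ≤ (Real.sinh (y / 2) ^ 2 - Real.sinh (x / 2) ^ 2) * (1 - s ^ 2) := by
      apply mul_nonneg
      · nlinarith
      · nlinarith
    nlinarith [sq_nonneg s]
  have h1 : 0 ≤ s * Real.cosh (x / 2) * Real.sqrt (1 + (s * Real.sinh (y / 2)) ^ 2) := by
    positivity
  have h2 : 0 ≤ s * Real.cosh (y / 2) * Real.sqrt (1 + (s * Real.sinh (x / 2)) ^ 2) := by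
    positivity
  have := Real.sqrt_le_sqrt hsq
  rwa [Real.sqrt_sq h1, Real.sqrt_sq h2] at this

/-- Shift monotonicity: for `c ≥ 0`, `t ↦ Δ(t+c) − Δ(t)` is monotone on `[0,∞)`. -/
lemma Del_shift (s : ℝ) (hs0 : 0 < s) (hs1 : s ≤ 1) (c : ℝ) (hc : 0 ≤ c) :
    MonotoneOn (fun t => Del s (t + c) - Del s t) (Set.Ici 0) := by
  have hF : ∀ t : ℝ, HasDerivAt (fun t => Del s (t + c) - Del s t)
      (Del' s (t + c) - Del' s t) t := by
    intro t
    have h1 : HasDerivAt (fun t : ℝ => t + c) 1 t := (hasDerivAt_id t).add_const c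
    have h2 : HasDerivAt (fun t : ℝ => Del s (t + c)) (Del' s (t + c) * 1) t :=
      by have := (hasDerivAt_Del s (t + c)).comp t h1; exact this
    have h3 := h2.sub (hasDerivAt_Del s t)
    rw [mul_one] at h3
    exact h3
  apply monotoneOn_of_deriv_nonneg (convex_Ici 0)
  · exact (Continuous.continuousOn (by
      have : Differentiable ℝ (fun t => Del s (t + c) - Del s t) :=
        fun t => (hF t).differentiableAt
      exact this.continuous))
  · intro t _
    exact (hF t).differentiableAt.differentiableWithinAt
  · intro t ht
    rw [(hF t).deriv]
    have ht0 : (0:ℝ) < t := by simpa using ht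
    have := Del'_mono s hs0 hs1 t (t + c) ht0.le (by linarith)
    linarith

end DistortedAux

open DistortedAux in
/-- Comparison with the distorted chain (Lemma on three points): if `x₀,x₁,x₂` is an
`(a,b)`-good chain and `y₀,y₁,y₂` lie on the ray of angle `φ` (the curvature angle of
`(a,b)`) with matching consecutive distances, then `d(x₀,x₂) ≥ d(y₀,y₂)`. -/
theorem dist_ge_distorted (a b lam φ : ℝ) (hab : GoodPair a b)
    (hlam1 : 1 < lam)
    (hlam2 : Real.cosh (Real.log lam / 2) = Real.sinh (a - b) / (2 * Real.sinh (a / 2)))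
    (hφ1 : 0 < φ) (hφ2 : φ ≤ π / 2)
    (hφ3 : Real.sinh (Real.log lam / 2) = Real.sin φ * Real.sinh (a / 2))
    (x₀ x₁ x₂ : UpperHalfPlane)
    (h01 : dist x₁ x₀ ≥ a) (h12 : dist x₂ x₁ ≥ a) (hg : gromov x₀ x₂ x₁ ≤ b)
    (t₀ t₁ t₂ : ℝ) (ht₀ : 0 < t₀) (ht01 : t₀ ≤ t₁) (ht12 : t₁ ≤ t₂)
    (y₀ y₁ y₂ : UpperHalfPlane)
    (hy₀ : (y₀ : ℂ) = (t₀ : ℂ) * Complex.exp (φ * Complex.I))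
    (hy₁ : (y₁ : ℂ) = (t₁ : ℂ) * Complex.exp (φ * Complex.I))
    (hy₂ : (y₂ : ℂ) = (t₂ : ℂ) * Complex.exp (φ * Complex.I))
    (hd1 : dist y₀ y₁ = dist x₀ x₁) (hd2 : dist y₁ y₂ = dist x₁ x₂) :
    dist x₀ x₂ ≥ dist y₀ y₂ := by
  obtain ⟨ha0, hb0, hgood⟩ := hab
  set s := Real.sin φ with hs
  have hs0 : 0 < s := Real.sin_pos_of_pos_of_lt_pi hφ1 (by linarith [Real.pi_pos])
  have hs1 : s ≤ 1 := Real.sin_le_one φ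
  -- a > 0 and a > 2b
  have hapos : 0 < a := by
    rcases lt_or_eq_of_le ha0 with h | h
    · exact h
    · exfalso
      rw [← h] at hgood
      simp at hgood
      have : Real.sinh (-b) ≤ 0 := Real.sinh_nonpos_iff.2 (by linarith)
      linarith
  have hsa : 0 < Real.sinh (a / 2) := Real.sinh_pos_iff.2 (by linarith)
  have hba : 2 * b < a := by
    have h1 : Real.sinh (a / 2) < Real.sinh (a - b) := by linarith
    have := Real.sinh_lt_sinh.1 h1
    linarith
  -- key identity: Δ(2(a-b)) = 2 Δ(a)
  have hDa : Del s a = Real.log lam := by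
    rw [Del, ← hφ3, Real.arsinh_sinh]; ring
  have hD2ab : Del s (2 * (a - b)) = 2 * Real.log lam := by
    have h2 : s * Real.sinh (a - b) = Real.sinh (Real.log lam) := by
      have : Real.log lam = 2 * (Real.log lam / 2) := by ring
      rw [this, Real.sinh_two_mul, hφ3, hlam2]
      field_simp
    rw [Del]
    have : 2 * (a - b) / 2 = a - b := by ring
    rw [this, h2, Real.arsinh_sinh]
  set d₀ := dist x₀ x₁ with hdd0
  set d₁ := dist x₁ x₂ with hdd1
  have hd₀a : a ≤ d₀ := by rw [hdd0, dist_comm]; exact h01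
  have hd₁a : a ≤ d₁ := by rw [hdd1, dist_comm]; exact h12
  -- superadditivity
  have key1 : Del s (a + (d₁ - 2 * b)) - Del s a ≤ Del s (d₀ + (d₁ - 2 * b)) - Del s d₀ :=
    Del_shift s hs0 hs1 (d₁ - 2 * b) (by linarith)
      (Set.mem_Ici.2 ha0) (Set.mem_Ici.2 (by linarith)) hd₀a
  have key2 : Del s (a + (a - 2 * b)) - Del s a ≤ Del s (d₁ + (a - 2 * b)) - Del s d₁ :=
    Del_shift s hs0 hs1 (a - 2 * b) (by linarith)
      (Set.mem_Ici.2 ha0) (Set.mem_Ici.2 (by linarith)) hd₁a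
  have hargs : a + (d₁ - 2 * b) = d₁ + (a - 2 * b) := by ring
  have hargs2 : a + (a - 2 * b) = 2 * (a - b) := by ring
  rw [hargs] at key1
  rw [hargs2, hD2ab, hDa] at key2
  have hsuper : Del s d₀ + Del s d₁ ≤ Del s (d₀ + (d₁ - 2 * b)) := by linarith
  -- Gromov product bound
  have hgromov : d₀ + (d₁ - 2 * b) ≤ dist x₀ x₂ := by
    rw [gromov] at hg; rw [hdd0, hdd1]; linarith
  -- distances along the ray
  have ray : ∀ (t t' : ℝ) (y y' : UpperHalfPlane), 0 < t → t ≤ t' →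
      (y : ℂ) = (t : ℂ) * Complex.exp (φ * Complex.I) →
      (y' : ℂ) = (t' : ℂ) * Complex.exp (φ * Complex.I) →
      Del s (dist y y') = Real.log t' - Real.log t := by
    intro t t' y y' ht htt' hyc hyc'
    have ht' : 0 < t' := lt_of_lt_of_le ht htt'
    have him : y.im = t * s := by
      rw [← UpperHalfPlane.coe_im, hyc]
      simp [Complex.mul_im, Complex.exp_ofReal_mul_I_im, Complex.exp_ofReal_mul_I_re, hs]
    have him' : y'.im = t' * s := by
      rw [← UpperHalfPlane.coe_im, hyc']
      simp [Complex.mul_im, Complex.exp_ofReal_mul_I_im, Complex.exp_ofReal_mul_I_re, hs]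
    have habs : dist (y : ℂ) (y' : ℂ) = t' - t := by
      rw [Complex.dist_eq, hyc, hyc', ← sub_mul, norm_mul, Complex.norm_exp_ofReal_mul_I,
        mul_one, ← Complex.ofReal_sub, Complex.norm_real, Real.norm_eq_abs, abs_sub_comm,
        abs_of_nonneg (by linarith)]
    have hsqrt : Real.sqrt (y.im * y'.im) = Real.sqrt (t * t') * s := by
      rw [him, him']
      rw [show t * s * (t' * s) = t * t' * s ^ 2 by ring,
        Real.sqrt_mul (by positivity), Real.sqrt_sq hs0.le]
    have hsh := UpperHalfPlane.sinh_half_dist y y'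
    rw [habs, hsqrt] at hsh
    have hQ : s * Real.sinh (dist y y' / 2) = (t' - t) / (2 * Real.sqrt (t * t')) := by
      rw [hsh]
      have h0 : Real.sqrt (t * t') > 0 := Real.sqrt_pos.2 (by positivity)
      field_simp
    have hexp : ∀ u : ℝ, 0 < u → Real.exp (Real.log u / 2) = Real.sqrt u := by
      intro u hu
      rw [Real.sqrt_eq_rpow, Real.rpow_def_of_pos hu]
      ring_nf
    have hsinh : Real.sinh ((Real.log t' - Real.log t) / 2)
        = (t' - t) / (2 * Real.sqrt (t * t')) := by
      rw [Real.sinh_eq]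
      have e1 : (Real.log t' - Real.log t) / 2 = Real.log t' / 2 - Real.log t / 2 := by ring
      rw [e1, Real.exp_sub, neg_sub, Real.exp_sub, hexp t ht, hexp t' ht',
        Real.sqrt_mul ht.le]
      have h1 : Real.sqrt t > 0 := Real.sqrt_pos.2 ht
      have h2 : Real.sqrt t' > 0 := Real.sqrt_pos.2 ht'
      have h3 : Real.sqrt t * Real.sqrt t = t := Real.mul_self_sqrt ht.le
      have h4 : Real.sqrt t' * Real.sqrt t' = t' := Real.mul_self_sqrt ht'.le
      rw [div_sub_div _ _ h1.ne' h2.ne', h3, h4]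
      ring
    rw [Del, hQ, ← hsinh, Real.arsinh_sinh]
    ring
  have hA := ray t₀ t₁ y₀ y₁ ht₀ ht01 hy₀ hy₁
  have hB := ray t₁ t₂ y₁ y₂ (lt_of_lt_of_le ht₀ ht01) ht12 hy₁ hy₂
  have hC := ray t₀ t₂ y₀ y₂ ht₀ (le_trans ht01 ht12) hy₀ hy₂
  rw [hd1] at hA
  rw [hd2] at hB
  have hfinal : Del s (dist y₀ y₂) ≤ Del s (dist x₀ x₂) := by
    have := (Del_mono s hs0).monotone hgromov
    rw [hC]
    have : Real.log t₂ - Real.log t₀ = Del s d₀ + Del s d₁ := by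
      linarith [hA, hB]
    rw [this]
    calc Del s d₀ + Del s d₁ ≤ Del s (d₀ + (d₁ - 2 * b)) := hsuper
      _ ≤ Del s (dist x₀ x₂) := (Del_mono s hs0).monotone hgromov
  exact (Del_mono s hs0).le_iff_le.1 hfinal
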